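/- Let ε₁, ε₂ ≥ 0 and let f denote the Laplace density with mean 0 and scale 2/ε₂. The mechanism M_L (with k = 2) on inputs (g, v), g ∈ {0,1}, v ∈ [-1,1], has output density Pr[(g',v') | (g,v)] = (e^{ε₁}/(e^{ε₁}+1))·f(v' - v) if g' = g, and (1/(e^{ε₁}+1))·f(v') if g' ≠ g. Then for any two inputs x₀, x₁ and any output y, the ratio of output densities is at most e^ε where ε = max{ε₂, ε₂/2 + ε₁}; i.e., M_L with k = 2 is max{ε₂, ε₂/2 + ε₁}-LDP. -/
import Mathlib


open Real

/-- The mechanism `M_L` with `k = 2` is `max{ε₂, ε₂/2 + ε₁}`-LDP. -/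
theorem mL_ldp (ε₁ ε₂ : ℝ) (hε₁ : 0 ≤ ε₁) (hε₂ : 0 < ε₂)
    (f : ℝ → ℝ) (hf : ∀ x, f x = 1 / (2 * (2 / ε₂)) * Real.exp (-|x| / (2 / ε₂)))
    (dens : Bool → ℝ → Bool → ℝ → ℝ)
    (hdens : ∀ g v g' v', dens g v g' v' =
      if g' = g then (Real.exp ε₁ / (Real.exp ε₁ + 1)) * f (v' - v)
      else (1 / (Real.exp ε₁ + 1)) * f v')
    (g₀ g₁ : Bool) (v₀ v₁ : ℝ)
    (hv₀ : v₀ ∈ Set.Icc (-1 : ℝ) 1) (hv₁ : v₁ ∈ Set.Icc (-1 : ℝ) 1)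
    (g' : Bool) (v' : ℝ) :
    dens g₀ v₀ g' v' ≤ Real.exp (max ε₂ (ε₂ / 2 + ε₁)) * dens g₁ v₁ g' v' := by
  obtain ⟨hv₀l, hv₀r⟩ := hv₀
  obtain ⟨hv₁l, hv₁r⟩ := hv₁
  have hfpos : ∀ x, 0 < f x := by
    intro x; rw [hf]; positivity
  have hdiv : ∀ x : ℝ, x / (2 / ε₂) = x * (ε₂ / 2) := by
    intro x; field_simp
  have key : ∀ a b : ℝ, f a ≤ Real.exp (ε₂ / 2 * |a - b|) * f b := by
    intro a b
    rw [hf, hf, mul_left_comm, ← Real.exp_add]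
    apply mul_le_mul_of_nonneg_left _ (by positivity)
    apply Real.exp_le_exp.2
    rw [hdiv, hdiv]
    have h1 : |b| - |a| ≤ |a - b| := by
      have := abs_sub_abs_le_abs_sub b a
      rwa [abs_sub_comm] at this
    nlinarith [hε₂.le, abs_nonneg (a - b)]
  have hmax1 : ε₂ ≤ max ε₂ (ε₂ / 2 + ε₁) := le_max_left _ _
  have hmax2 : ε₂ / 2 + ε₁ ≤ max ε₂ (ε₂ / 2 + ε₁) := le_max_right _ _
  have hD : (0:ℝ) < Real.exp ε₁ + 1 := by positivity
  rw [hdens, hdens]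
  by_cases h0 : g' = g₀ <;> by_cases h1 : g' = g₁
  · rw [if_pos h0, if_pos h1]
    have h2 : f (v' - v₀) ≤ Real.exp (max ε₂ (ε₂ / 2 + ε₁)) * f (v' - v₁) := by
      refine le_trans (key (v' - v₀) (v' - v₁)) ?_
      apply mul_le_mul_of_nonneg_right _ (hfpos _).le
      apply Real.exp_le_exp.2
      have : |v' - v₀ - (v' - v₁)| = |v₁ - v₀| := by ring_nf
      rw [this]
      have : |v₁ - v₀| ≤ 2 := by
        rw [abs_le]; constructor <;> linarith
      nlinarith
    calc Real.exp ε₁ / (Real.exp ε₁ + 1) * f (v' - v₀)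
        ≤ Real.exp ε₁ / (Real.exp ε₁ + 1) * (Real.exp (max ε₂ (ε₂ / 2 + ε₁)) * f (v' - v₁)) := by
          apply mul_le_mul_of_nonneg_left h2 (by positivity)
      _ = Real.exp (max ε₂ (ε₂ / 2 + ε₁)) * (Real.exp ε₁ / (Real.exp ε₁ + 1) * f (v' - v₁)) := by ring
  · rw [if_pos h0, if_neg h1]
    have h2 : f (v' - v₀) ≤ Real.exp (ε₂ / 2) * f v' := by
      refine le_trans (key (v' - v₀) v') ?_
      apply mul_le_mul_of_nonneg_right _ (hfpos _).le
      apply Real.exp_le_exp.2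
      have : |v' - v₀ - v'| = |v₀| := by
        rw [show v' - v₀ - v' = -v₀ by ring, abs_neg]
      rw [this]
      have : |v₀| ≤ 1 := abs_le.2 ⟨hv₀l, hv₀r⟩
      nlinarith
    have h3 : Real.exp ε₁ * Real.exp (ε₂ / 2) ≤ Real.exp (max ε₂ (ε₂ / 2 + ε₁)) := by
      rw [← Real.exp_add]
      apply Real.exp_le_exp.2; linarith
    calc Real.exp ε₁ / (Real.exp ε₁ + 1) * f (v' - v₀)
        ≤ Real.exp ε₁ / (Real.exp ε₁ + 1) * (Real.exp (ε₂ / 2) * f v') := by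
          apply mul_le_mul_of_nonneg_left h2 (by positivity)
      _ = Real.exp ε₁ * Real.exp (ε₂ / 2) * (1 / (Real.exp ε₁ + 1) * f v') := by ring
      _ ≤ Real.exp (max ε₂ (ε₂ / 2 + ε₁)) * (1 / (Real.exp ε₁ + 1) * f v') := by
          apply mul_le_mul_of_nonneg_right h3 (mul_nonneg (by positivity) (hfpos _).le)
  · rw [if_neg h0, if_pos h1]
    have h2 : f v' ≤ Real.exp (ε₂ / 2) * f (v' - v₁) := by
      refine le_trans (key v' (v' - v₁)) ?_
      apply mul_le_mul_of_nonneg_right _ (hfpos _).le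
      apply Real.exp_le_exp.2
      have : |v' - (v' - v₁)| = |v₁| := by rw [show v' - (v' - v₁) = v₁ by ring]
      rw [this]
      have : |v₁| ≤ 1 := abs_le.2 ⟨hv₁l, hv₁r⟩
      nlinarith
    have h3 : Real.exp (ε₂ / 2) ≤ Real.exp (max ε₂ (ε₂ / 2 + ε₁)) * Real.exp ε₁ := by
      rw [← Real.exp_add]
      apply Real.exp_le_exp.2
      linarith [hmax1]
    calc 1 / (Real.exp ε₁ + 1) * f v'
        ≤ 1 / (Real.exp ε₁ + 1) * (Real.exp (ε₂ / 2) * f (v' - v₁)) := by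
          apply mul_le_mul_of_nonneg_left h2 (by positivity)
      _ = Real.exp (ε₂ / 2) * (1 / (Real.exp ε₁ + 1) * f (v' - v₁)) := by ring
      _ ≤ Real.exp (max ε₂ (ε₂ / 2 + ε₁)) * Real.exp ε₁ * (1 / (Real.exp ε₁ + 1) * f (v' - v₁)) := by
          apply mul_le_mul_of_nonneg_right h3 (mul_nonneg (by positivity) (hfpos _).le)
      _ = Real.exp (max ε₂ (ε₂ / 2 + ε₁)) * (Real.exp ε₁ / (Real.exp ε₁ + 1) * f (v' - v₁)) := by ring
  · rw [if_neg h0, if_neg h1]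
    have h3 : (1:ℝ) ≤ Real.exp (max ε₂ (ε₂ / 2 + ε₁)) := by
      rw [← Real.exp_zero]
      apply Real.exp_le_exp.2; positivity
    calc 1 / (Real.exp ε₁ + 1) * f v'
        ≤ Real.exp (max ε₂ (ε₂ / 2 + ε₁)) * (1 / (Real.exp ε₁ + 1) * f v') := by
          nlinarith [hfpos v', hD, mul_pos (one_div_pos.2 hD) (hfpos v')]
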